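/- Let V, W be complex vector spaces and let v₁ ⊗ w₁, v₂ ⊗ w₂ be simple tensors with {v₁, v₂} linearly independent and {w₁, w₂} linearly independent. Then the only simple tensors in span{v₁ ⊗ w₁, v₂ ⊗ w₂} are the scalar multiples of v₁ ⊗ w₁ and of v₂ ⊗ w₂. -/

import Mathlib

open TensorProduct

lemma exists_dual_family {K V : Type*} [Field K] [AddCommGroup V] [Module K V]
    {ι : Type*} [DecidableEq ι] {v : ι → V} (hv : LinearIndependent K v) :
    ∃ f : ι → (V →ₗ[K] K), ∀ i j, f i (v j) = if j = i then 1 else 0 := by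
  classical
  let b := Module.Basis.span hv
  have key : ∀ i, (b i : V) = v i := fun i => congrArg Subtype.val (Module.Basis.span_apply hv i)
  have h : ∀ i, ∃ g : V →ₗ[K] K,
      g ∘ₗ (Submodule.span K (Set.range v)).subtype = b.coord i :=
    fun i => LinearMap.exists_extend (b.coord i)
  choose f hf using h
  refine ⟨f, fun i j => ?_⟩
  have hmem : v j ∈ Submodule.span K (Set.range v) := Submodule.subset_span ⟨j, rfl⟩
  have h1 : f i (v j) = b.coord i ⟨v j, hmem⟩ := by
    rw [← hf i]; rfl
  have h2 : (⟨v j, hmem⟩ : Submodule.span K (Set.range v)) = b j := by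
    ext; simp [key]
  rw [h1, h2, Module.Basis.coord_apply, Module.Basis.repr_self]
  simp [Finsupp.single_apply]

theorem stmt_10 {V W : Type*} [AddCommGroup V] [Module ℂ V]
    [AddCommGroup W] [Module ℂ W]
    (v1 v2 : V) (w1 w2 : W)
    (hv : LinearIndependent ℂ ![v1, v2])
    (hw : LinearIndependent ℂ ![w1, w2])
    (t : V ⊗[ℂ] W)
    (ht : t ∈ Submodule.span ℂ {v1 ⊗ₜ[ℂ] w1, v2 ⊗ₜ[ℂ] w2})
    (hsimple : ∃ (x : V) (y : W), t = x ⊗ₜ[ℂ] y) :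
    (∃ c : ℂ, t = c • (v1 ⊗ₜ[ℂ] w1)) ∨ (∃ c : ℂ, t = c • (v2 ⊗ₜ[ℂ] w2)) := by
  obtain ⟨x, y, hxy⟩ := hsimple
  obtain ⟨a, c, hac⟩ := Submodule.mem_span_pair.mp ht
  obtain ⟨f, hfd⟩ := exists_dual_family hv
  obtain ⟨g, hgd⟩ := exists_dual_family hw
  have hf0 : f 0 v1 = 1 := by simpa using hfd 0 0
  have hf01 : f 0 v2 = 0 := by simpa using hfd 0 1
  have hf10 : f 1 v1 = 0 := by simpa using hfd 1 0
  have hf1 : f 1 v2 = 1 := by simpa using hfd 1 1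
  have hg0 : g 0 w1 = 1 := by simpa using hgd 0 0
  have hg01 : g 0 w2 = 0 := by simpa using hgd 0 1
  have hg10 : g 1 w1 = 0 := by simpa using hgd 1 0
  have hg1 : g 1 w2 = 1 := by simpa using hgd 1 1
  set L : (V →ₗ[ℂ] ℂ) → (W →ₗ[ℂ] ℂ) → (V ⊗[ℂ] W →ₗ[ℂ] ℂ) :=
    fun p q => (TensorProduct.lid ℂ ℂ).toLinearMap ∘ₗ TensorProduct.map p q with hL
  have hLt : ∀ p q (u : V) (z : W), L p q (u ⊗ₜ[ℂ] z) = p u * q z := by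
    intro p q u z
    simp [hL, smul_eq_mul]
  have happ : ∀ i j, f i x * g j y = a * (f i v1 * g j w1) + c * (f i v2 * g j w2) := by
    intro i j
    have := congrArg (L (f i) (g j)) (hxy.symm.trans hac.symm)
    simpa [hLt, map_add, map_smul, smul_eq_mul] using this
  have e00 : f 0 x * g 0 y = a := by simpa [hf0, hf01, hg0, hg01] using happ 0 0
  have e11 : f 1 x * g 1 y = c := by simpa [hf10, hf1, hg10, hg1] using happ 1 1
  have e01 : f 0 x * g 1 y = 0 := by simpa [hf0, hf01, hg10, hg1] using happ 0 1
  have e10 : f 1 x * g 0 y = 0 := by simpa [hf10, hf1, hg0, hg01] using happ 1 0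
  have hac0 : a * c = 0 := by
    have : a * c = (f 0 x * g 1 y) * (f 1 x * g 0 y) := by
      rw [← e00, ← e11]; ring
    rw [this, e01, e10, mul_zero]
  rcases mul_eq_zero.mp hac0 with h | h
  · right; exact ⟨c, by rw [← hac, h, zero_smul, zero_add]⟩
  · left; exact ⟨a, by rw [← hac, h, zero_smul, add_zero]⟩
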